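/- Let n ≥ 1 and let H be a finite-index subgroup of Sp(2n, ℤ). For all but finitely many primes p, the composite homomorphism H → Sp(2n, ℤ/pℤ) → Sp(2n, ℤ/pℤ)/Z(Sp(2n, ℤ/pℤ)), obtained by reducing entries modulo p and then passing to the quotient by the center, is surjective. -/

import Mathlib

open Matrix

lemma J_map {l : Type*} [DecidableEq l] [Fintype l] {R S : Type*} [CommRing R] [CommRing S]
    (f : R →+* S) : (Matrix.J l R).map f = Matrix.J l S := by
  ext i j
  cases i <;> cases j <;>
    simp [Matrix.J, Matrix.map_apply, Matrix.one_apply, apply_ite f]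

lemma mem_sp_map {l : Type*} [DecidableEq l] [Fintype l] {R S : Type*} [CommRing R] [CommRing S]
    (f : R →+* S) (A : Matrix (l ⊕ l) (l ⊕ l) R) (hA : A ∈ Matrix.symplecticGroup l R) :
    A.map f ∈ Matrix.symplecticGroup l S := by
  rw [SymplecticGroup.mem_iff] at hA ⊢
  have h2 : (A * Matrix.J l R * Aᵀ).map f = (Matrix.J l R).map f := by rw [hA]
  rw [Matrix.map_mul, Matrix.map_mul, Matrix.transpose_map, J_map f] at h2
  rw [← Matrix.transpose_map]
  exact h2

/-- Entrywise reduction as a group homomorphism between symplectic groups. -/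
def spReduce (l : Type*) [DecidableEq l] [Fintype l] {R S : Type*} [CommRing R] [CommRing S]
    (f : R →+* S) : Matrix.symplecticGroup l R →* Matrix.symplecticGroup l S where
  toFun A := ⟨A.1.map f, mem_sp_map f A.1 A.2⟩
  map_one' := Subtype.ext (by
    show (1 : Matrix (l ⊕ l) (l ⊕ l) R).map f = (1 : Matrix (l ⊕ l) (l ⊕ l) S)
    ext i j
    simp [Matrix.map_apply, Matrix.one_apply, apply_ite f])
  map_mul' A B := Subtype.ext (by
    show (A.1 * B.1).map f = A.1.map f * B.1.map f
    exact Matrix.map_mul)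


section TauBasics

variable {l : Type*} [DecidableEq l] [Fintype l] {R : Type*} [CommRing R]

/-- The standard symplectic pairing given by `J`. -/
def omg (x y : (l ⊕ l) → R) : R := x ⬝ᵥ (Matrix.J l R *ᵥ y)

lemma mulVec_J_inl (y : (l ⊕ l) → R) (i : l) :
    (Matrix.J l R *ᵥ y) (Sum.inl i) = -y (Sum.inr i) := by
  simp [Matrix.J, Matrix.mulVec, dotProduct, Fintype.sum_sum_type, Matrix.fromBlocks,
    Matrix.one_apply, Finset.sum_ite_eq', ite_and]

lemma mulVec_J_inr (y : (l ⊕ l) → R) (i : l) :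
    (Matrix.J l R *ᵥ y) (Sum.inr i) = y (Sum.inl i) := by
  simp [Matrix.J, Matrix.mulVec, dotProduct, Fintype.sum_sum_type, Matrix.fromBlocks,
    Matrix.one_apply, Finset.sum_ite_eq', ite_and]

lemma omg_eq (x y : (l ⊕ l) → R) :
    omg x y = (∑ i, x (Sum.inr i) * y (Sum.inl i)) - ∑ i, x (Sum.inl i) * y (Sum.inr i) := by
  simp only [omg, dotProduct, Fintype.sum_sum_type, mulVec_J_inl, mulVec_J_inr,
    mul_neg, Finset.sum_neg_distrib]
  abel

lemma omg_self (x : (l ⊕ l) → R) : omg x x = 0 := by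
  rw [omg_eq]
  rw [sub_eq_zero]
  exact Finset.sum_congr rfl fun i _ => mul_comm _ _

lemma omg_skew (x y : (l ⊕ l) → R) : omg y x = -omg x y := by
  rw [omg_eq, omg_eq, neg_sub]
  congr 1 <;> exact Finset.sum_congr rfl fun i _ => mul_comm _ _

lemma omg_zero_left (y : (l ⊕ l) → R) : omg 0 y = 0 := by
  simp [omg]

lemma omg_add_right (x y z : (l ⊕ l) → R) : omg x (y + z) = omg x y + omg x z := by
  simp [omg, Matrix.mulVec_add, dotProduct_add]

lemma omg_sub_right (x y z : (l ⊕ l) → R) : omg x (y - z) = omg x y - omg x z := by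
  simp [omg, Matrix.mulVec_sub, dotProduct_sub]

lemma omg_single_inl (x : (l ⊕ l) → R) (i : l) :
    omg x (Pi.single (Sum.inl i) 1) = x (Sum.inr i) := by
  rw [omg_eq]
  simp [Pi.single_apply]

lemma omg_single_inr (x : (l ⊕ l) → R) (i : l) :
    omg x (Pi.single (Sum.inr i) 1) = -x (Sum.inl i) := by
  rw [omg_eq]
  simp [Pi.single_apply]

/-- Symplectic form is preserved by symplectic matrices (row-vector action). -/
lemma omg_vecMul {A : Matrix (l ⊕ l) (l ⊕ l) R} (hA : A ∈ Matrix.symplecticGroup l R)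
    (x y : (l ⊕ l) → R) : omg (x ᵥ* A) (y ᵥ* A) = omg x y := by
  rw [SymplecticGroup.mem_iff] at hA
  unfold omg
  rw [← Matrix.mulVec_transpose A y, Matrix.mulVec_mulVec, Matrix.dotProduct_mulVec,
    Matrix.vecMul_vecMul, ← Matrix.mul_assoc, hA, ← Matrix.dotProduct_mulVec]

end TauBasics
set_option linter.unusedSectionVars false

section Tau

variable {l : Type*} [DecidableEq l] [Fintype l] {R : Type*} [CommRing R]

lemma my_vecMulVec_mul (u v : (l ⊕ l) → R) (A : Matrix (l ⊕ l) (l ⊕ l) R) :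
    vecMulVec u v * A = vecMulVec u (v ᵥ* A) := by
  ext i j
  simp [Matrix.vecMulVec_apply, Matrix.mul_apply, Matrix.vecMul, dotProduct, Finset.mul_sum,
    mul_assoc, mul_add]

lemma my_vecMul_vecMulVec (x u v : (l ⊕ l) → R) :
    x ᵥ* vecMulVec u v = (x ⬝ᵥ u) • v := by
  ext j
  simp [Matrix.vecMul, Matrix.vecMulVec_apply, dotProduct, Finset.sum_mul, add_mul, mul_assoc]

lemma my_vecMulVec_smul (u : (l ⊕ l) → R) (c : R) (v : (l ⊕ l) → R) :
    vecMulVec u (c • v) = c • vecMulVec u v := by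
  ext i j
  simp [Matrix.vecMulVec_apply, mul_comm, mul_assoc, mul_left_comm]

lemma my_vecMulVec_zero (u : (l ⊕ l) → R) :
    vecMulVec u (0 : (l ⊕ l) → R) = 0 := by
  ext i j
  simp [Matrix.vecMulVec_apply]

/-- Symplectic transvection along `v` with parameter `c` (acting on row vectors). -/
def tau (v : (l ⊕ l) → R) (c : R) : Matrix (l ⊕ l) (l ⊕ l) R :=
  1 + c • vecMulVec (Matrix.J l R *ᵥ v) v

lemma vecMul_tau (x v : (l ⊕ l) → R) (c : R) :
    x ᵥ* tau v c = x + (c * omg x v) • v := by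
  unfold tau
  rw [← my_vecMulVec_smul, Matrix.vecMul_add, Matrix.vecMul_one, my_vecMul_vecMulVec]
  simp [omg, smul_smul, mul_comm]

lemma omg_smul_right (x : (l ⊕ l) → R) (c : R) (y : (l ⊕ l) → R) :
    omg x (c • y) = c * omg x y := by
  simp [omg, Matrix.mulVec_smul, dotProduct_smul, smul_eq_mul]

lemma omg_add_left (x y z : (l ⊕ l) → R) : omg (x + y) z = omg x z + omg y z := by
  simp [omg, add_dotProduct]

lemma omg_smul_left (c : R) (x y : (l ⊕ l) → R) : omg (c • x) y = c * omg x y := by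
  simp [omg, smul_dotProduct, smul_eq_mul]

lemma omg_conj (A : Matrix (l ⊕ l) (l ⊕ l) R) (x y : (l ⊕ l) → R) :
    omg (x ᵥ* A) (y ᵥ* A) = x ⬝ᵥ ((A * Matrix.J l R * Aᵀ) *ᵥ y) := by
  unfold omg
  rw [← Matrix.mulVec_transpose A y, Matrix.mulVec_mulVec, Matrix.dotProduct_mulVec,
    Matrix.vecMul_vecMul, ← Matrix.mul_assoc, ← Matrix.dotProduct_mulVec]

lemma mem_sp_of_pointwise {A : Matrix (l ⊕ l) (l ⊕ l) R}
    (h : ∀ x y, omg (x ᵥ* A) (y ᵥ* A) = omg x y) : A ∈ Matrix.symplecticGroup l R := by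
  rw [SymplecticGroup.mem_iff]
  ext i j
  have := h (Pi.single i 1) (Pi.single j 1)
  rw [omg_conj] at this
  simpa [omg, Matrix.mulVec_single, single_dotProduct] using this

lemma tau_mem (v : (l ⊕ l) → R) (c : R) : tau v c ∈ Matrix.symplecticGroup l R := by
  apply mem_sp_of_pointwise
  intro x y
  rw [vecMul_tau, vecMul_tau]
  rw [omg_add_left, omg_add_right, omg_add_right, omg_smul_left, omg_smul_right,
    omg_smul_right, omg_smul_left, omg_self, omg_skew y v]
  ring

lemma tau_mul (v : (l ⊕ l) → R) (c d : R) : tau v c * tau v d = tau v (c + d) := by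
  have hdot : v ⬝ᵥ (Matrix.J l R *ᵥ v) = 0 := omg_self v
  unfold tau
  rw [Matrix.add_mul, Matrix.one_mul, Matrix.mul_add, Matrix.mul_one, Matrix.smul_mul,
    Matrix.mul_smul, my_vecMulVec_mul, my_vecMul_vecMulVec, hdot, zero_smul,
    my_vecMulVec_zero, smul_zero, smul_zero, add_zero, add_smul]
  abel

lemma tau_zero (v : (l ⊕ l) → R) : tau v 0 = 1 := by
  simp [tau]

lemma tau_pow (v : (l ⊕ l) → R) (c : R) (k : ℕ) : tau v c ^ k = tau v (k * c) := by
  induction k with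
  | zero => simp [tau_zero]
  | succ k ih =>
    rw [pow_succ, ih, tau_mul]
    congr 1
    push_cast
    ring

lemma tau_map {S : Type*} [CommRing S] (f : R →+* S) (v : (l ⊕ l) → R) (c : R) :
    (tau v c).map f = tau (fun i => f (v i)) (f c) := by
  have hJv : ∀ i, f ((Matrix.J l R *ᵥ v) i) = (Matrix.J l S *ᵥ fun i => f (v i)) i := by
    intro i
    simp only [Matrix.mulVec, dotProduct, map_sum, f.map_mul]
    refine Finset.sum_congr rfl fun j _ => ?_
    congr 1
    have := congrFun (congrFun (J_map (l := l) f) i) j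
    simpa [Matrix.map_apply] using this
  ext i j
  simp only [tau, Matrix.map_apply, Matrix.add_apply, Matrix.smul_apply, Matrix.one_apply,
    Matrix.vecMulVec_apply, smul_eq_mul, map_add, f.map_mul, apply_ite f, f.map_one, f.map_zero,
    hJv i]

end Tau
section TVdef

variable {l : Type*} [DecidableEq l] [Fintype l] {R : Type*} [CommRing R]

/-- Transvection as an element of the symplectic group. -/
def sptau (v : (l ⊕ l) → R) (c : R) : Matrix.symplecticGroup l R :=
  ⟨tau v c, tau_mem v c⟩

variable (l R) in
/-- The subgroup generated by all symplectic transvections. -/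
def TV : Subgroup (Matrix.symplecticGroup l R) :=
  Subgroup.closure (Set.range fun p : (((l ⊕ l) → R) × R) => sptau p.1 p.2)

lemma sptau_mem_TV (v : (l ⊕ l) → R) (c : R) : sptau v c ∈ TV l R :=
  Subgroup.subset_closure ⟨(v, c), rfl⟩

end TVdef

section Generation

variable {l : Type*} [DecidableEq l] [Fintype l] {F : Type*} [Field F]

/-- Vectors supported in the `t`-block. -/
def Wt (t : Finset l) (x : (l ⊕ l) → F) : Prop :=
  ∀ i, i ∉ t → x (Sum.inl i) = 0 ∧ x (Sum.inr i) = 0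

/-- Vectors supported outside the `t`-block. -/
def Ot (t : Finset l) (x : (l ⊕ l) → F) : Prop :=
  ∀ i ∈ t, x (Sum.inl i) = 0 ∧ x (Sum.inr i) = 0

/-- `B` is a "good" element: in `TV`, fixes everything supported outside `t`,
and preserves the `t`-block. -/
def Good (t : Finset l) (B : Matrix.symplecticGroup l F) : Prop :=
  B ∈ TV l F ∧ (∀ x, Ot t x → x ᵥ* B.1 = x) ∧ (∀ x, Wt t x → Wt t (x ᵥ* B.1))

lemma Wt.sub {t : Finset l} {x y : (l ⊕ l) → F} (hx : Wt t x) (hy : Wt t y) :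
    Wt t (x - y) := fun i hi => by
  obtain ⟨h1, h2⟩ := hx i hi; obtain ⟨h3, h4⟩ := hy i hi
  constructor <;> simp [h1, h2, h3, h4]

lemma Wt.add {t : Finset l} {x y : (l ⊕ l) → F} (hx : Wt t x) (hy : Wt t y) :
    Wt t (x + y) := fun i hi => by
  obtain ⟨h1, h2⟩ := hx i hi; obtain ⟨h3, h4⟩ := hy i hi
  constructor <;> simp [h1, h2, h3, h4]

lemma Wt.smul {t : Finset l} {x : (l ⊕ l) → F} (hx : Wt t x) (c : F) :
    Wt t (c • x) := fun i hi => by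
  obtain ⟨h1, h2⟩ := hx i hi
  constructor <;> simp [h1, h2]

lemma Wt_single_inl {t : Finset l} {a : l} (ha : a ∈ t) :
    Wt t (Pi.single (Sum.inl a) (1 : F)) := fun i hi => by
  constructor <;> rw [Pi.single_apply, if_neg] <;> simp <;> rintro rfl <;> exact hi ha

lemma Wt_single_inr {t : Finset l} {a : l} (ha : a ∈ t) :
    Wt t (Pi.single (Sum.inr a) (1 : F)) := fun i hi => by
  constructor <;> rw [Pi.single_apply, if_neg] <;> simp <;> rintro rfl <;> exact hi ha

/-- pairing of a vector supported outside `t` with one supported inside is zero. -/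
lemma omg_Ot_Wt {t : Finset l} {x w : (l ⊕ l) → F} (hx : Ot t x) (hw : Wt t w) :
    omg x w = 0 := by
  rw [omg_eq, sub_eq_zero]
  refine Eq.trans (Finset.sum_eq_zero fun i _ => ?_) (Finset.sum_eq_zero fun i _ => ?_).symm <;>
    by_cases hi : i ∈ t
  · rw [(hx i hi).2, zero_mul]
  · rw [(hw i hi).1, mul_zero]
  · rw [(hx i hi).1, zero_mul]
  · rw [(hw i hi).2, mul_zero]

lemma good_tau {t : Finset l} {w : (l ⊕ l) → F} (hw : Wt t w) (c : F) :
    Good t (sptau w c) := by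
  refine ⟨sptau_mem_TV w c, fun x hx => ?_, fun x hx => ?_⟩
  · show x ᵥ* tau w c = x
    rw [vecMul_tau, omg_Ot_Wt hx hw, mul_zero, zero_smul, add_zero]
  · show Wt t (x ᵥ* tau w c)
    rw [vecMul_tau]
    exact hx.add (hw.smul _)

lemma good_mul {t : Finset l} {B C : Matrix.symplecticGroup l F} (hB : Good t B)
    (hC : Good t C) : Good t (B * C) := by
  refine ⟨mul_mem hB.1 hC.1, fun x hx => ?_, fun x hx => ?_⟩ <;>
    rw [show ((B * C : Matrix.symplecticGroup l F) : Matrix (l ⊕ l) (l ⊕ l) F) = B.1 * C.1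
      from rfl, ← Matrix.vecMul_vecMul]
  · rw [hB.2.1 x hx, hC.2.1 x hx]
  · exact hC.2.2 _ (hB.2.2 x hx)

lemma exists_pairing {t : Finset l} {x : (l ⊕ l) → F} (hx : Wt t x) (hx0 : x ≠ 0) :
    ∃ y, Wt t y ∧ omg x y ≠ 0 := by
  obtain ⟨j, hj⟩ := Function.ne_iff.mp hx0
  simp only [Pi.zero_apply] at hj
  cases j with
  | inl i =>
    have hi : i ∈ t := by by_contra hit; exact hj (hx i hit).1
    exact ⟨Pi.single (Sum.inr i) 1, Wt_single_inr hi, by rw [omg_single_inr]; exact neg_ne_zero.mpr hj⟩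
  | inr i =>
    have hi : i ∈ t := by by_contra hit; exact hj (hx i hit).2
    exact ⟨Pi.single (Sum.inl i) 1, Wt_single_inl hi, by rw [omg_single_inl]; exact hj⟩

lemma move_vec_ne {t : Finset l} {u v : (l ⊕ l) → F} (hu : Wt t u) (hv : Wt t v)
    (huv : omg u v ≠ 0) :
    ∃ B : Matrix.symplecticGroup l F, Good t B ∧ u ᵥ* B.1 = v := by
  refine ⟨sptau (v - u) (omg u v)⁻¹, good_tau (hv.sub hu) _, ?_⟩
  show u ᵥ* tau (v - u) (omg u v)⁻¹ = v
  rw [vecMul_tau, omg_sub_right, omg_self, sub_zero, inv_mul_cancel₀ huv, one_smul,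
    add_sub_cancel]

lemma exists_common {t : Finset l} {u v : (l ⊕ l) → F} (hu : Wt t u) (hv : Wt t v)
    (hu0 : u ≠ 0) (hv0 : v ≠ 0) :
    ∃ w, Wt t w ∧ omg u w ≠ 0 ∧ omg v w ≠ 0 := by
  obtain ⟨y1, hy1W, hy1⟩ := exists_pairing hu hu0
  obtain ⟨y2, hy2W, hy2⟩ := exists_pairing hv hv0
  by_cases h1 : omg v y1 ≠ 0
  · exact ⟨y1, hy1W, hy1, h1⟩
  by_cases h2 : omg u y2 ≠ 0
  · exact ⟨y2, hy2W, h2, hy2⟩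
  push_neg at h1 h2
  refine ⟨y1 + y2, hy1W.add hy2W, ?_, ?_⟩
  · rw [omg_add_right, h2, add_zero]; exact hy1
  · rw [omg_add_right, h1, zero_add]; exact hy2

lemma move_vec {t : Finset l} {u v : (l ⊕ l) → F} (hu : Wt t u) (hv : Wt t v)
    (hu0 : u ≠ 0) (hv0 : v ≠ 0) :
    ∃ B : Matrix.symplecticGroup l F, Good t B ∧ u ᵥ* B.1 = v := by
  by_cases huv : omg u v ≠ 0
  · exact move_vec_ne hu hv huv
  push_neg at huv
  obtain ⟨w, hwW, huw, hvw⟩ := exists_common hu hv hu0 hv0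
  have hwv : omg w v ≠ 0 := by rw [omg_skew]; exact neg_ne_zero.mpr hvw
  obtain ⟨B1, hB1, hB1u⟩ := move_vec_ne hu hwW huw
  obtain ⟨B2, hB2, hB2w⟩ := move_vec_ne hwW hv hwv
  refine ⟨B1 * B2, good_mul hB1 hB2, ?_⟩
  rw [show ((B1 * B2 : Matrix.symplecticGroup l F) : Matrix (l ⊕ l) (l ⊕ l) F) = B1.1 * B2.1
    from rfl, ← Matrix.vecMul_vecMul, hB1u, hB2w]

lemma move_pair {t : Finset l} {u w e f : (l ⊕ l) → F} {c : F} (hc : c ≠ 0)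
    (hu : Wt t u) (hw : Wt t w) (he : Wt t e) (hf : Wt t f)
    (huw : omg u w = c) (hef : omg e f = c) :
    ∃ B : Matrix.symplecticGroup l F, Good t B ∧ u ᵥ* B.1 = e ∧ w ᵥ* B.1 = f := by
  have hu0 : u ≠ 0 := by rintro rfl; rw [omg_zero_left] at huw; exact hc huw.symm
  have he0 : e ≠ 0 := by rintro rfl; rw [omg_zero_left] at hef; exact hc hef.symm
  obtain ⟨B1, hB1, hB1u⟩ := move_vec hu he hu0 he0
  set w1 : (l ⊕ l) → F := w ᵥ* B1.1 with hw1def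
  have hw1W : Wt t w1 := hB1.2.2 w hw
  have hew1 : omg e w1 = c := by
    rw [← hB1u, hw1def, omg_vecMul B1.2, huw]
  by_cases h2 : omg w1 f ≠ 0
  · set B2 := sptau (f - w1) (omg w1 f)⁻¹ with hB2def
    have hgood2 : Good t B2 := good_tau (hf.sub hw1W) _
    refine ⟨B1 * B2, good_mul hB1 hgood2, ?_, ?_⟩ <;>
      rw [show ((B1 * B2 : Matrix.symplecticGroup l F) : Matrix (l ⊕ l) (l ⊕ l) F)
        = B1.1 * B2.1 from rfl, ← Matrix.vecMul_vecMul]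
    · rw [hB1u]
      show e ᵥ* tau (f - w1) (omg w1 f)⁻¹ = e
      rw [vecMul_tau, omg_sub_right, hef, hew1, sub_self, mul_zero, zero_smul, add_zero]
    · rw [← hw1def]
      show w1 ᵥ* tau (f - w1) (omg w1 f)⁻¹ = f
      rw [vecMul_tau, omg_sub_right, omg_self, sub_zero, inv_mul_cancel₀ h2, one_smul,
        add_sub_cancel]
  push_neg at h2
  set g : (l ⊕ l) → F := e + w1 with hgdef
  have hgW : Wt t g := he.add hw1W
  have hw1g : omg w1 g = -c := by
    rw [hgdef, omg_add_right, omg_self, add_zero, omg_skew, hew1]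
  have hw1g0 : omg w1 g ≠ 0 := by rw [hw1g]; exact neg_ne_zero.mpr hc
  have heg : omg e g = c := by rw [hgdef, omg_add_right, omg_self, zero_add, hew1]
  have hgf : omg g f = c := by rw [hgdef, omg_add_left, hef, h2, add_zero]
  have hgf0 : omg g f ≠ 0 := hgf ▸ hc
  set B2 := sptau (g - w1) (omg w1 g)⁻¹ with hB2def
  set B3 := sptau (f - g) (omg g f)⁻¹ with hB3def
  have hgood2 : Good t B2 := good_tau (hgW.sub hw1W) _
  have hgood3 : Good t B3 := good_tau (hf.sub hgW) _
  have act2e : e ᵥ* B2.1 = e := by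
    show e ᵥ* tau (g - w1) (omg w1 g)⁻¹ = e
    rw [vecMul_tau, omg_sub_right, heg, hew1, sub_self, mul_zero, zero_smul, add_zero]
  have act2w : w1 ᵥ* B2.1 = g := by
    show w1 ᵥ* tau (g - w1) (omg w1 g)⁻¹ = g
    rw [vecMul_tau, omg_sub_right, omg_self, sub_zero, inv_mul_cancel₀ hw1g0, one_smul,
      add_sub_cancel]
  have act3e : e ᵥ* B3.1 = e := by
    show e ᵥ* tau (f - g) (omg g f)⁻¹ = e
    rw [vecMul_tau, omg_sub_right, hef, heg, sub_self, mul_zero, zero_smul, add_zero]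
  have act3g : g ᵥ* B3.1 = f := by
    show g ᵥ* tau (f - g) (omg g f)⁻¹ = f
    rw [vecMul_tau, omg_sub_right, omg_self, sub_zero, inv_mul_cancel₀ hgf0, one_smul,
      add_sub_cancel]
  refine ⟨B1 * B2 * B3, good_mul (good_mul hB1 hgood2) hgood3, ?_, ?_⟩ <;>
    rw [show ((B1 * B2 * B3 : Matrix.symplecticGroup l F) : Matrix (l ⊕ l) (l ⊕ l) F)
      = B1.1 * B2.1 * B3.1 from rfl, ← Matrix.vecMul_vecMul, ← Matrix.vecMul_vecMul]
  · rw [hB1u, act2e, act3e]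
  · rw [← hw1def, act2w, act3g]

end Generation
section MainInduction

variable {l : Type*} [DecidableEq l] [Fintype l] {F : Type*} [Field F]

lemma omg_single_inl_single_inr (a : l) :
    omg (Pi.single (Sum.inl a) (1 : F)) (Pi.single (Sum.inr a) (1 : F)) = -1 := by
  rw [omg_single_inr, Pi.single_eq_same]

lemma fix_mem_TV (s : Finset l) :
    ∀ A : Matrix.symplecticGroup l F,
      (∀ i, i ∉ s → Pi.single (Sum.inl i) (1 : F) ᵥ* A.1 = Pi.single (Sum.inl i) 1 ∧
        Pi.single (Sum.inr i) (1 : F) ᵥ* A.1 = Pi.single (Sum.inr i) 1) → A ∈ TV l F := by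
  induction s using Finset.induction_on with
  | empty =>
    intro A hA
    have : A = 1 := by
      apply Subtype.ext
      ext j k
      have hrow : ∀ j : l ⊕ l, Pi.single j (1 : F) ᵥ* A.1 = Pi.single j 1 := by
        intro j
        cases j with
        | inl i => exact (hA i (Finset.notMem_empty i)).1
        | inr i => exact (hA i (Finset.notMem_empty i)).2
      have := congrFun (hrow j) k
      rw [Matrix.single_vecMul] at this
      simp only [one_smul, Matrix.row_apply] at this
      rw [show ((1 : Matrix.symplecticGroup l F) : Matrix (l ⊕ l) (l ⊕ l) F) = 1 from rfl]
      rw [Matrix.one_apply, this, Pi.single_apply, eq_comm]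
      simp [eq_comm]
    rw [this]
    exact one_mem _
  | @insert a s ha IH =>
    intro A hA
    set t : Finset l := insert a s with htdef
    set e : (l ⊕ l) → F := Pi.single (Sum.inl a) 1 with hedef
    set f : (l ⊕ l) → F := Pi.single (Sum.inr a) 1 with hfdef
    set u : (l ⊕ l) → F := e ᵥ* A.1 with hudef
    set w : (l ⊕ l) → F := f ᵥ* A.1 with hwdef
    have hat : a ∈ t := Finset.mem_insert_self a s
    have heW : Wt t e := Wt_single_inl hat
    have hfW : Wt t f := Wt_single_inr hat
    have hef : omg e f = -1 := omg_single_inl_single_inr a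
    have huw : omg u w = -1 := by rw [hudef, hwdef, omg_vecMul A.2, hef]
    -- u and w are supported in the t block
    have hfixed : ∀ i, i ∉ t → ∀ x : (l ⊕ l) → F,
        omg (x ᵥ* A.1) (Pi.single (Sum.inl i) 1) = omg x (Pi.single (Sum.inl i) 1) ∧
        omg (x ᵥ* A.1) (Pi.single (Sum.inr i) 1) = omg x (Pi.single (Sum.inr i) 1) := by
      intro i hi x
      obtain ⟨h1, h2⟩ := hA i hi
      constructor
      · conv_lhs => rw [← h1]
        exact omg_vecMul A.2 x _
      · conv_lhs => rw [← h2]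
        exact omg_vecMul A.2 x _
    have hvecW : ∀ x : (l ⊕ l) → F, Wt t x → Wt t (x ᵥ* A.1) := by
      intro x hx i hi
      obtain ⟨h1, h2⟩ := hfixed i hi x
      constructor
      · have := h2
        rw [omg_single_inr, omg_single_inr] at this
        rw [neg_inj.mp this, (hx i hi).1]
      · have := h1
        rw [omg_single_inl, omg_single_inl] at this
        rw [this, (hx i hi).2]
    have huW : Wt t u := hvecW e heW
    have hwW : Wt t w := hvecW f hfW
    obtain ⟨B, hBgood, hBu, hBw⟩ :=
      move_pair (neg_ne_zero.mpr one_ne_zero) huW hwW heW hfW huw hef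
    have hmem : A * B ∈ TV l F := by
      apply IH
      intro i hi
      rw [show ((A * B : Matrix.symplecticGroup l F) : Matrix (l ⊕ l) (l ⊕ l) F)
        = A.1 * B.1 from rfl]
      by_cases hia : i = a
      · subst hia
        constructor
        · rw [← Matrix.vecMul_vecMul, ← hedef, ← hudef, hBu, hedef]
        · rw [← Matrix.vecMul_vecMul, ← hfdef, ← hwdef, hBw, hfdef]
      · have hit : i ∉ t := by
          rw [htdef, Finset.mem_insert, not_or]
          exact ⟨hia, hi⟩
        obtain ⟨h1, h2⟩ := hA i hit
        have hOt : ∀ j : l ⊕ l, (∀ k, k ≠ i → j ≠ Sum.inl k ∧ j ≠ Sum.inr k) → True := fun _ _ => trivial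
        constructor
        · rw [← Matrix.vecMul_vecMul, h1]
          apply hBgood.2.1
          intro k hk
          constructor <;> rw [Pi.single_apply, if_neg] <;> simp <;> rintro rfl <;>
            exact hit hk
        · rw [← Matrix.vecMul_vecMul, h2]
          apply hBgood.2.1
          intro k hk
          constructor <;> rw [Pi.single_apply, if_neg] <;> simp <;> rintro rfl <;>
            exact hit hk
    have : A = (A * B) * B⁻¹ := by group
    rw [this]
    exact mul_mem hmem (inv_mem hBgood.1)

lemma TV_eq_top : TV l F = ⊤ := by
  rw [Subgroup.eq_top_iff']
  intro A
  exact fix_mem_TV Finset.univ A (fun i hi => absurd (Finset.mem_univ i) hi)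

end MainInduction
section Reduction

variable {l : Type*} [DecidableEq l] [Fintype l]

lemma spReduce_sptau {R S : Type*} [CommRing R] [CommRing S] (f : R →+* S)
    (v : (l ⊕ l) → R) (c : R) :
    spReduce l f (sptau v c) = sptau (fun i => f (v i)) (f c) :=
  Subtype.ext (tau_map f v c)

lemma sptau_coe {R : Type*} [CommRing R] (v : (l ⊕ l) → R) (c : R) :
    ((sptau v c : Matrix.symplecticGroup l R) : Matrix (l ⊕ l) (l ⊕ l) R) = tau v c := rfl

lemma red_surjective (p : ℕ) [Fact p.Prime] :
    Function.Surjective (spReduce l (Int.castRingHom (ZMod p))) := by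
  rw [← MonoidHom.range_eq_top]
  rw [eq_top_iff, ← TV_eq_top (l := l) (F := ZMod p), TV, Subgroup.closure_le]
  rintro x ⟨⟨v, c⟩, rfl⟩
  refine ⟨sptau (fun i => ((v i : ZMod p).cast : ℤ)) ((c.cast : ℤ)), ?_⟩
  rw [spReduce_sptau]
  have : ∀ z : ZMod p, (Int.castRingHom (ZMod p)) (z.cast : ℤ) = z := fun z =>
    ZMod.intCast_rightInverse z
  simp only [this]

lemma sptau_pow_p (p : ℕ) [Fact p.Prime] (v : (l ⊕ l) → ZMod p) (c : ZMod p) :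
    (sptau v c) ^ p = 1 := by
  apply Subtype.ext
  rw [SubmonoidClass.coe_pow, sptau_coe, tau_pow, ZMod.natCast_self, zero_mul, tau_zero]
  rfl

theorem reduction_surj_of_lt (H : Subgroup (Matrix.symplecticGroup l ℤ)) (hH : H.FiniteIndex)
    (p : ℕ) (hp : p.Prime) (hgt : H.index < p) :
    Function.Surjective ((spReduce l (Int.castRingHom (ZMod p))).comp H.subtype) := by
  haveI := Fact.mk hp
  set red := spReduce l (Int.castRingHom (ZMod p)) with hred
  set K := H.map red with hK
  have hKdvd : K.index ∣ H.index := H.index_map_dvd (red_surjective p)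
  have hHne : H.index ≠ 0 := hH.index_ne_zero
  have hKne : K.index ≠ 0 := fun h0 => hHne (zero_dvd_iff.mp (h0 ▸ hKdvd))
  have hKle : K.index ≤ H.index := Nat.le_of_dvd (Nat.pos_of_ne_zero hHne) hKdvd
  set N := K.normalCore with hN
  have hNdvd : N.index ∣ Nat.factorial K.index := by
    haveI : Fintype (Matrix.symplecticGroup l (ZMod p) ⧸ K) := Fintype.ofFinite _
    haveI : DecidableEq (Matrix.symplecticGroup l (ZMod p) ⧸ K) := Classical.decEq _
    rw [hN, Subgroup.normalCore_eq_ker, Subgroup.index_ker]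
    calc Nat.card (MulAction.toPermHom (Matrix.symplecticGroup l (ZMod p))
          (Matrix.symplecticGroup l (ZMod p) ⧸ K)).range
        ∣ Nat.card (Equiv.Perm (Matrix.symplecticGroup l (ZMod p) ⧸ K)) :=
          Subgroup.card_subgroup_dvd_card _
      _ = Nat.factorial K.index := by
          rw [Nat.card_eq_fintype_card, Fintype.card_perm, Subgroup.index_eq_card,
            Nat.card_eq_fintype_card]
  have hpN : ¬ p ∣ N.index := by
    intro hdvd
    have : p ∣ Nat.factorial K.index := hdvd.trans hNdvd
    rw [Nat.Prime.dvd_factorial hp] at this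
    omega
  have hgen : TV l (ZMod p) ≤ K := by
    rw [TV, Subgroup.closure_le]
    rintro x ⟨⟨v, c⟩, rfl⟩
    refine K.normalCore_le ?_
    have hnormal : N.Normal := Subgroup.normalCore_normal K
    rw [← QuotientGroup.eq_one_iff (N := N)]
    have h1 : ((sptau v c : Matrix.symplecticGroup l (ZMod p)) : _ ⧸ N) ^ p = 1 := by
      rw [← QuotientGroup.mk_pow, sptau_pow_p, QuotientGroup.mk_one]
    have hdp : orderOf ((sptau v c : Matrix.symplecticGroup l (ZMod p)) : _ ⧸ N) ∣ p :=
      orderOf_dvd_of_pow_eq_one h1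
    have hdc : orderOf ((sptau v c : Matrix.symplecticGroup l (ZMod p)) : _ ⧸ N) ∣ N.index := by
      rw [Subgroup.index_eq_card]
      exact orderOf_dvd_natCard _
    rcases (Nat.Prime.eq_one_or_self_of_dvd hp _ hdp) with h | h
    · rwa [orderOf_eq_one_iff] at h
    · rw [h] at hdc
      exact absurd hdc hpN
  have hKtop : K = ⊤ := by
    rw [eq_top_iff, ← TV_eq_top (l := l) (F := ZMod p)]
    exact hgen
  rw [← MonoidHom.range_eq_top, MonoidHom.range_comp, Subgroup.range_subtype]
  exact hKtop
theorem sp_reduction_mod_center_surjective_on_finite_index (n : ℕ) (hn : 1 ≤ n)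
    (H : Subgroup (Matrix.symplecticGroup (Fin n) ℤ)) (hH : H.FiniteIndex) :
    {p : ℕ | p.Prime ∧ ¬ Function.Surjective
        ((QuotientGroup.mk' (Subgroup.center (Matrix.symplecticGroup (Fin n) (ZMod p)))).comp
          ((spReduce (Fin n) (Int.castRingHom (ZMod p))).comp H.subtype))}.Finite := by
  apply Set.Finite.subset (Set.finite_Iic H.index)
  rintro p ⟨hp, hns⟩
  rw [Set.mem_Iic]
  by_contra hle
  push_neg at hle
  apply hns
  have hsurj := reduction_surj_of_lt H hH p hp hle
  exact (QuotientGroup.mk'_surjective _).comp hsurj
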